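/- The canonical cylinder decomposition of an open set is unique: let A ⊆ 2^ω be open, and suppose φ and ψ each assign to every i ∈ ℕ a set of binary strings of length i such that (a) the cylinders {[σ] : σ ∈ φ(i), i ∈ ℕ} are pairwise disjoint with union A, and likewise for ψ, and (b) both φ and ψ satisfy property (*). Then φ = ψ. -/

import Mathlib

open MeasureTheory

noncomputable section

/-- The binary-digit map sending `r ∈ [0,1)` to its sequence of binary digits,
so `binDigits r n` is the `n`-th binary digit of `r`. -/
def binDigits (r : ℝ) : ℕ → Bool := fun n => decide (⌊r * 2 ^ (n + 1)⌋ % 2 = 1)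

/-- The uniform product ("coin-flipping") probability measure `μ` on Cantor space `2^ω`,
realized as the pushforward of Lebesgue measure on `[0,1)` under the binary-digit map. -/
def μC : Measure (ℕ → Bool) := (volume.restrict (Set.Ico (0 : ℝ) 1)).map binDigits

/-- The basic clopen cylinder `[σ]` determined by a finite binary string `σ`. -/
def cyl (σ : List Bool) : Set (ℕ → Bool) :=
  {f | ∀ i : ℕ, ∀ h : i < σ.length, f i = σ.get ⟨i, h⟩}

/-- Property (*): for every binary string `σ` of length `i` not in `φ i`, the union of the
cylinders determined by proper extensions of `σ` appearing in some `φ j`, `j > i`,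
has measure `< 2^{-i}`. -/
def StarProperty (φ : ℕ → Set (List Bool)) : Prop :=
  ∀ i : ℕ, ∀ σ : List Bool, σ.length = i → σ ∉ φ i →
    μC (⋃ τ ∈ {τ : List Bool | σ <+: τ ∧ σ ≠ τ ∧ ∃ j, i < j ∧ τ ∈ φ j}, cyl τ)
      < (1 / 2 : ENNReal) ^ i



lemma mem_cyl_iff' {σ : List Bool} {f : ℕ → Bool} :
    f ∈ cyl σ ↔ ∀ i : ℕ, ∀ h : i < σ.length, f i = σ[i] := Iff.rfl

lemma cyl_anti {ρ σ : List Bool} (h : ρ <+: σ) : cyl σ ⊆ cyl ρ := by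
  intro f hf i hi
  have h1 := mem_cyl_iff'.mp hf i (lt_of_lt_of_le hi h.length_le)
  rw [List.get_eq_getElem, h1, h.getElem hi]

lemma prefix_of_cyl {σ τ : List Bool} {f : ℕ → Bool} (hσ : f ∈ cyl σ) (hτ : f ∈ cyl τ)
    (h : σ.length ≤ τ.length) : σ <+: τ := by
  rw [List.prefix_iff_eq_take]
  apply List.ext_getElem (by simp [Nat.min_eq_left h])
  intro i h1 h2
  rw [List.getElem_take]
  rw [← mem_cyl_iff'.mp hσ i h1, mem_cyl_iff'.mp hτ i (lt_of_lt_of_le h1 h)]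

lemma cyl_comparable {σ τ : List Bool} {f : ℕ → Bool} (hσ : f ∈ cyl σ) (hτ : f ∈ cyl τ) :
    σ <+: τ ∨ τ <+: σ := by
  rcases le_total σ.length τ.length with h | h
  · exact Or.inl (prefix_of_cyl hσ hτ h)
  · exact Or.inr (prefix_of_cyl hτ hσ h)

lemma cyl_nonempty (σ : List Bool) : (cyl σ).Nonempty :=
  ⟨fun i => if h : i < σ.length then σ[i] else true, fun i h => by simp [h]⟩

lemma measurableSet_cyl (σ : List Bool) : MeasurableSet (cyl σ) := by
  have : cyl σ = ⋂ (i : Fin σ.length), (fun f : ℕ → Bool => f i) ⁻¹' {σ.get i} := by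
    ext f
    simp only [Set.mem_iInter, Set.mem_preimage, Set.mem_singleton_iff]
    exact ⟨fun h i => h i i.2, fun h i hi => h ⟨i, hi⟩⟩
  rw [this]
  exact MeasurableSet.iInter fun i => (measurable_pi_apply (i : ℕ)) (measurableSet_singleton _)

lemma measurable_binDigits : Measurable binDigits := by
  rw [measurable_pi_iff]
  intro n
  have h1 : Measurable fun r : ℝ => (⌊r * 2 ^ (n + 1)⌋ : ℤ) :=
    Int.measurable_floor.comp (measurable_id.mul_const ((2 : ℝ) ^ (n + 1)))
  exact (measurable_from_top (f := fun z : ℤ => decide (z % 2 = 1))).comp h1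

def valb (σ : List Bool) : ℕ := σ.foldl (fun a b => 2 * a + cond b 1 0) 0

lemma valb_concat (σ : List Bool) (b : Bool) :
    valb (σ ++ [b]) = 2 * valb σ + cond b 1 0 := by
  simp [valb, List.foldl_append]

lemma valb_lt (σ : List Bool) : valb σ < 2 ^ σ.length := by
  induction σ using List.reverseRecOn with
  | nil => simp [valb]
  | append_singleton σ b ih =>
    rw [valb_concat]
    simp only [List.length_append, List.length_singleton, pow_succ]
    cases b <;> simp <;> omega

lemma cyl_concat (σ : List Bool) (b : Bool) :
    cyl (σ ++ [b]) = cyl σ ∩ {f | f σ.length = b} := by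
  ext f
  simp only [mem_cyl_iff', Set.mem_inter_iff, Set.mem_setOf_eq, List.length_append,
    List.length_singleton]
  constructor
  · intro h
    refine ⟨fun i hi => ?_, ?_⟩
    · rw [h i (by omega), List.getElem_append_left hi]
    · rw [h σ.length (by omega)]
      simp
  · rintro ⟨h1, h2⟩ i hi
    rcases Nat.lt_or_ge i σ.length with h | h
    · rw [h1 i h, List.getElem_append_left h]
    · have : i = σ.length := by omega
      subst this
      rw [h2]
      simp

lemma binDigits_mem_cyl_iff (σ : List Bool) {r : ℝ} (hr : r ∈ Set.Ico (0:ℝ) 1) :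
    binDigits r ∈ cyl σ ↔
      (valb σ : ℝ) ≤ r * 2 ^ σ.length ∧ r * 2 ^ σ.length < valb σ + 1 := by
  induction σ using List.reverseRecOn with
  | nil =>
    simp only [List.length_nil, pow_zero, mul_one, valb, List.foldl_nil, Nat.cast_zero,
      zero_add]
    constructor
    · intro _
      exact ⟨hr.1, hr.2⟩
    · intro _ i h
      exact absurd h (by simp)
  | append_singleton σ b ih =>
    rw [cyl_concat]
    set n := σ.length with hn
    set k := valb σ with hk
    have h2n : (0:ℝ) < 2 ^ n := by positivity
    have hval : (valb (σ ++ [b]) : ℝ) = 2 * k + (cond b 1 0 : ℕ) := by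
      rw [valb_concat]; push_cast; ring
    have hlen : (σ ++ [b]).length = n + 1 := by simp [hn]
    have hpow : r * 2 ^ (n + 1) = (r * 2 ^ n) * 2 := by ring
    rw [hlen, hval]
    constructor
    · rintro ⟨h1, h2⟩
      obtain ⟨hlo, hhi⟩ := ih.mp h1
      have hfl : (2 * (k:ℤ)) ≤ ⌊r * 2 ^ (n+1)⌋ ∧ ⌊r * 2 ^ (n+1)⌋ < 2 * k + 2 := by
        constructor
        · apply Int.le_floor.mpr; push_cast; rw [hpow]; linarith
        · apply Int.floor_lt.mpr; push_cast; rw [hpow]; linarith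
      have hd : decide (⌊r * 2 ^ (n+1)⌋ % 2 = 1) = b := h2
      cases b with
      | true =>
        have : ⌊r * 2 ^ (n+1)⌋ % 2 = 1 := by simpa using hd
        have heq : ⌊r * 2 ^ (n+1)⌋ = 2 * k + 1 := by omega
        have lo := Int.le_floor.mp heq.ge
        have hi' := Int.lt_floor_add_one (r * 2 ^ (n+1))
        rw [heq] at hi'
        push_cast at lo hi' ⊢
        refine ⟨?_, ?_⟩ <;>
          simp only [Bool.cond_true, Nat.cast_one] <;> linarith
      | false =>
        have : ¬ (⌊r * 2 ^ (n+1)⌋ % 2 = 1) := by simpa using hd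
        have heq : ⌊r * 2 ^ (n+1)⌋ = 2 * k := by omega
        have lo := Int.le_floor.mp heq.ge
        have hi' := Int.lt_floor_add_one (r * 2 ^ (n+1))
        rw [heq] at hi'
        push_cast at lo hi' ⊢
        refine ⟨?_, ?_⟩ <;>
          simp only [Bool.cond_false, Nat.cast_zero, add_zero] <;> linarith
    · rintro ⟨h1, h2⟩
      have hc : ((cond b 1 0 : ℕ) : ℝ) = 0 ∨ ((cond b 1 0 : ℕ) : ℝ) = 1 := by
        cases b <;> simp
      have hmem : binDigits r ∈ cyl σ := by
        apply ih.mpr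
        rcases hc with h | h <;> rw [h] at h1 h2 <;> rw [hpow] at h1 h2 <;>
          constructor <;> linarith
      refine ⟨hmem, ?_⟩
      have heq : ⌊r * 2 ^ (n+1)⌋ = 2 * (k:ℤ) + (cond b 1 0 : ℕ) := by
        apply Int.floor_eq_iff.mpr
        constructor <;> push_cast <;> linarith
      show decide (⌊r * 2 ^ (n+1)⌋ % 2 = 1) = b
      rw [heq]
      cases b <;> simp <;> omega

lemma μC_cyl (σ : List Bool) : μC (cyl σ) = (1 / 2 : ENNReal) ^ σ.length := by
  set n := σ.length with hn
  set k := valb σ with hk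
  have h2n : (0:ℝ) < 2 ^ n := by positivity
  rw [μC, Measure.map_apply measurable_binDigits (measurableSet_cyl σ),
    Measure.restrict_apply (measurable_binDigits (measurableSet_cyl σ))]
  have hE : binDigits ⁻¹' cyl σ ∩ Set.Ico (0:ℝ) 1
      = Set.Ico ((k : ℝ) / 2 ^ n) ((k + 1) / 2 ^ n) := by
    ext r
    simp only [Set.mem_inter_iff, Set.mem_preimage, Set.mem_Ico]
    constructor
    · rintro ⟨h1, h2⟩
      obtain ⟨ha, hb⟩ := (binDigits_mem_cyl_iff σ ⟨h2.1, h2.2⟩).mp h1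
      constructor
      · rw [div_le_iff₀ h2n]; linarith
      · rw [lt_div_iff₀ h2n]; linarith
    · rintro ⟨ha, hb⟩
      have hk1 : (k : ℝ) + 1 ≤ 2 ^ n := by
        have := valb_lt σ
        have : (k : ℝ) < 2 ^ n := by exact_mod_cast this
        have hint : k + 1 ≤ 2 ^ n := valb_lt σ
        exact_mod_cast hint
      have hr : r ∈ Set.Ico (0:ℝ) 1 := by
        constructor
        · exact le_trans (by positivity) ha
        · calc r < (k + 1) / 2 ^ n := hb
            _ ≤ 1 := by rw [div_le_one h2n]; linarith
      refine ⟨(binDigits_mem_cyl_iff σ hr).mpr ⟨?_, ?_⟩, hr⟩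
      · rw [div_le_iff₀ h2n] at ha; linarith
      · rw [lt_div_iff₀ h2n] at hb; linarith
  rw [hE, Real.volume_Ico]
  have : (k + 1) / 2 ^ n - (k : ℝ) / 2 ^ n = (1/2) ^ n := by
    field_simp
    rw [← mul_pow]; norm_num
  rw [this, ENNReal.ofReal_pow (by norm_num : (0:ℝ) ≤ 1/2)]
  congr 1
  rw [ENNReal.ofReal_div_of_pos (by norm_num : (0:ℝ) < 2)]
  simp

lemma cyl_subset_union {F : ℕ → Set (List Bool)} {A : Set (ℕ → Bool)}
    (hFuni : (⋃ i, ⋃ σ ∈ F i, cyl σ) = A) {i : ℕ} {σ : List Bool} (hσ : σ ∈ F i) :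
    cyl σ ⊆ A := by
  rw [← hFuni]
  exact fun g hg => Set.mem_iUnion.mpr ⟨i, Set.mem_biUnion hσ hg⟩

lemma key {A : Set (ℕ → Bool)} {G : ℕ → Set (List Bool)}
    (hGlen : ∀ i : ℕ, ∀ σ ∈ G i, σ.length = i)
    (hGuni : (⋃ i, ⋃ σ ∈ G i, cyl σ) = A)
    (hGstar : StarProperty G)
    (σ : List Bool) (hσA : cyl σ ⊆ A)
    (hnot : ∀ k : ℕ, ∀ ρ : List Bool, ρ ∈ G k → ¬ (ρ <+: σ)) : False := by
  have hσnot : σ ∉ G σ.length := fun h => hnot σ.length σ h List.prefix_rfl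
  have hstar := hGstar σ.length σ rfl hσnot
  have hsub : cyl σ ⊆
      ⋃ τ ∈ {τ : List Bool | σ <+: τ ∧ σ ≠ τ ∧ ∃ j, σ.length < j ∧ τ ∈ G j}, cyl τ := by
    intro g hg
    have hgA : g ∈ A := hσA hg
    rw [← hGuni] at hgA
    obtain ⟨k, hk⟩ := Set.mem_iUnion.mp hgA
    obtain ⟨ρ, hρG, hgρ⟩ := Set.mem_iUnion₂.mp hk
    rcases cyl_comparable hgρ hg with h | h
    · exact absurd h (hnot k ρ hρG)
    · have hne : σ ≠ ρ := fun e => hnot k ρ hρG (e ▸ List.prefix_rfl)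
      have hlen : σ.length < ρ.length :=
        lt_of_le_of_ne h.length_le (fun e => hne (h.eq_of_length e))
      exact Set.mem_biUnion ⟨h, hne, ρ.length, hlen, (hGlen k ρ hρG) ▸ hρG⟩ hgρ
  have hle := (measure_mono (μ := μC) hsub)
  rw [μC_cyl σ] at hle
  exact absurd (hle.trans_lt hstar) (lt_irrefl _)

lemma main_incl {A : Set (ℕ → Bool)} {F G : ℕ → Set (List Bool)}
    (hFlen : ∀ i : ℕ, ∀ σ ∈ F i, σ.length = i)
    (hGlen : ∀ i : ℕ, ∀ σ ∈ G i, σ.length = i)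
    (hFdisj : ∀ i j : ℕ, ∀ σ τ : List Bool,
      σ ∈ F i → τ ∈ F j → σ ≠ τ → Disjoint (cyl σ) (cyl τ))
    (hGdisj : ∀ i j : ℕ, ∀ σ τ : List Bool,
      σ ∈ G i → τ ∈ G j → σ ≠ τ → Disjoint (cyl σ) (cyl τ))
    (hFuni : (⋃ i, ⋃ σ ∈ F i, cyl σ) = A)
    (hGuni : (⋃ i, ⋃ σ ∈ G i, cyl σ) = A)
    (hFstar : StarProperty F) (hGstar : StarProperty G)
    {i : ℕ} {σ : List Bool} (hσ : σ ∈ F i) : σ ∈ G i := by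
  obtain ⟨f, hf⟩ := cyl_nonempty σ
  have hσA : cyl σ ⊆ A := cyl_subset_union hFuni hσ
  have hfA : f ∈ A := hσA hf
  rw [← hGuni] at hfA
  obtain ⟨j, hj⟩ := Set.mem_iUnion.mp hfA
  obtain ⟨τ, hτG, hfτ⟩ := Set.mem_iUnion₂.mp hj
  by_cases heq : σ = τ
  · subst heq
    have : i = j := by rw [← hFlen i σ hσ, hGlen j σ hτG]
    exact this ▸ hτG
  · rcases cyl_comparable hf hfτ with h | h
    · -- σ proper prefix of τ : contradict star for G at σ
      have hlt : σ.length < τ.length :=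
        lt_of_le_of_ne h.length_le (fun e => heq (h.eq_of_length e))
      refine (key hGlen hGuni hGstar σ hσA ?_).elim
      intro k ρ hρ hpre
      have h1 : ρ <+: τ := hpre.trans h
      have hne : ρ ≠ τ := fun e => by
        rw [e] at hpre
        exact absurd (hpre.length_le) (not_le.mpr hlt)
      have hdisj := hGdisj k j ρ τ hρ hτG hne
      obtain ⟨g, hg⟩ := cyl_nonempty τ
      exact Set.disjoint_left.mp hdisj (cyl_anti h1 hg) hg
    · -- τ proper prefix of σ : contradict star for F at τ
      have hlt : τ.length < σ.length :=
        lt_of_le_of_ne h.length_le (fun e => heq (h.eq_of_length e).symm)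
      have hτA : cyl τ ⊆ A := cyl_subset_union hGuni hτG
      refine (key hFlen hFuni hFstar τ hτA ?_).elim
      intro k ρ hρ hpre
      have h1 : ρ <+: σ := hpre.trans h
      have hne : ρ ≠ σ := fun e => by
        rw [e] at hpre
        exact absurd (hpre.length_le) (not_le.mpr hlt)
      have hdisj := hFdisj k i ρ σ hρ hσ hne
      exact Set.disjoint_left.mp hdisj (cyl_anti h1 hf) hf


/-- The canonical cylinder decomposition of an open set is unique: if `φ` and `ψ` both
decompose the open set `A` into pairwise disjoint cylinders and both satisfy property (*),
then `φ = ψ`. -/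
theorem canonical_decomposition_unique
    (A : Set (ℕ → Bool)) (hA : IsOpen A)
    (φ ψ : ℕ → Set (List Bool))
    (hφlen : ∀ i : ℕ, ∀ σ ∈ φ i, σ.length = i)
    (hψlen : ∀ i : ℕ, ∀ σ ∈ ψ i, σ.length = i)
    (hφdisj : ∀ i j : ℕ, ∀ σ τ : List Bool,
      σ ∈ φ i → τ ∈ φ j → σ ≠ τ → Disjoint (cyl σ) (cyl τ))
    (hψdisj : ∀ i j : ℕ, ∀ σ τ : List Bool,
      σ ∈ ψ i → τ ∈ ψ j → σ ≠ τ → Disjoint (cyl σ) (cyl τ))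
    (hφuni : (⋃ i, ⋃ σ ∈ φ i, cyl σ) = A)
    (hψuni : (⋃ i, ⋃ σ ∈ ψ i, cyl σ) = A)
    (hφstar : StarProperty φ) (hψstar : StarProperty ψ) :
    φ = ψ := by
  funext i
  ext σ
  exact ⟨fun h => main_incl hφlen hψlen hφdisj hψdisj hφuni hψuni hφstar hψstar h,
    fun h => main_incl hψlen hφlen hψdisj hφdisj hψuni hφuni hψstar hφstar h⟩

end
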